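/- Let a ∈ [5/16, 5/14] and b = 5/(6a). Then for every ℓ ∈ {0, 1, 2, 3, 4, 5}, the 6a-periodizations of B_2 satisfy ∑_{n∈ℤ} [ B_2(6an + aℓ + 1/b) − B_2(6an + aℓ + 4/b) ] = v_ℓ, where (v_0, v_1, v_2, v_3, v_4, v_5) = (0, −2a, −2a, 0, 2a, 2a). -/

import Mathlib

open MeasureTheory Complex

noncomputable section

/-- The first B-spline `B₁ = χ_{[-1/2,1/2]}`. -/
def B1 : ℝ → ℝ := Set.indicator (Set.Icc (-(1:ℝ)/2) (1/2)) (fun _ => 1)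

/-- The B-splines: `Bspline 1 = B₁` and `Bspline (n+1) = Bspline n ∗ B₁` (convolution). -/
def Bspline : ℕ → ℝ → ℝ
  | 0 => fun _ => 0
  | 1 => B1
  | (n+2) => fun x => ∫ t : ℝ, Bspline (n+1) t * B1 (x - t)

/-- The cardinal B-spline `N n x = B n (x - n/2)`. -/
def cardN (n : ℕ) (x : ℝ) : ℝ := Bspline n (x - (n : ℝ)/2)

/-- `e t = exp(2πit)`. -/
def e (t : ℝ) : ℂ := Complex.exp (2 * Real.pi * Complex.I * t)

/-- The Gabor atom `g_{k,m}(x) = e^{2πibmx} g(x - ak)`. -/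
def gabor (g : ℝ → ℂ) (a b : ℝ) (k m : ℤ) : ℝ → ℂ :=
  fun x => e (b * (m : ℝ) * x) * g (x - a * (k : ℝ))

/-- The `L²(ℝ)` inner product `⟨f, g⟩ = ∫ conj (f x) * g x` (conjugate-linear in the first slot). -/
def inner2 (f g : ℝ → ℂ) : ℂ := ∫ x : ℝ, (starRingEnd ℂ) (f x) * g x

/-- The squared `L²(ℝ)` norm. -/
def normSq2 (f : ℝ → ℂ) : ℝ := ∫ x : ℝ, ‖f x‖^2

/-- The pointwise Zak transform `(Z_λ f)(x, ν) = √λ ∑_{k∈ℤ} f(λ(x-k)) e^{2πikν}`. -/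
def Zak (lam : ℝ) (f : ℝ → ℂ) (x ν : ℝ) : ℂ :=
  (Real.sqrt lam : ℂ) * ∑' k : ℤ, f (lam * (x - (k : ℝ))) * e ((k : ℝ) * ν)

lemma B2_of (x : ℝ) : Bspline 2 x = max (1 - |x|) 0 := by
  have hiff : ∀ t : ℝ, (max (-(1:ℝ)/2) (x - 1/2) ≤ t ∧ t ≤ min (1/2) (x + 1/2)) ↔
      ((-(1:ℝ)/2 ≤ t ∧ t ≤ 1/2) ∧ (-(1:ℝ)/2 ≤ x - t ∧ x - t ≤ 1/2)) := by
    intro t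
    rw [max_le_iff, le_min_iff]
    constructor <;> intro h <;>
      refine ⟨⟨?_, ?_⟩, ?_, ?_⟩ <;> linarith [h.1.1, h.1.2, h.2.1, h.2.2]
  have h : ∀ t : ℝ, B1 t * B1 (x - t)
      = Set.indicator (Set.Icc (max (-(1:ℝ)/2) (x - 1/2)) (min (1/2) (x + 1/2))) (fun _ => (1:ℝ)) t := by
    intro t
    simp only [B1, Set.indicator_apply, Set.mem_Icc]
    by_cases hc : (-(1:ℝ)/2 ≤ t ∧ t ≤ 1/2) ∧ (-(1:ℝ)/2 ≤ x - t ∧ x - t ≤ 1/2)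
    · rw [if_pos hc.1, if_pos hc.2, if_pos ((hiff t).2 hc)]; ring
    · rw [if_neg (mt (hiff t).1 hc)]
      rcases not_and_or.1 hc with h1 | h1
      · rw [if_neg h1]; ring
      · rw [if_neg h1]; ring
  have : Bspline 2 x = ∫ t : ℝ, Set.indicator (Set.Icc (max (-(1:ℝ)/2) (x - 1/2)) (min (1/2) (x + 1/2))) (fun _ => (1:ℝ)) t := by
    show (∫ t : ℝ, B1 t * B1 (x - t)) = _
    exact integral_congr_ae (Filter.Eventually.of_forall h)
  rw [this]
  rw [MeasureTheory.integral_indicator_const (1:ℝ) measurableSet_Icc]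
  simp only [smul_eq_mul, mul_one, measureReal_def, Real.volume_Icc]
  have hd : min (1/2) (x + 1/2) - max (-(1:ℝ)/2) (x - 1/2) = 1 - |x| := by
    rcases le_total x 0 with hx | hx
    · rw [_root_.abs_of_nonpos hx, min_eq_right (by linarith), max_eq_left (by linarith)]; ring
    · rw [_root_.abs_of_nonneg hx, min_eq_left (by linarith), max_eq_right (by linarith)]; ring
  rw [hd]
  rcases le_total (1 - |x|) 0 with h0 | h0
  · rw [ENNReal.ofReal_of_nonpos h0, max_eq_right h0]; simp
  · rw [ENNReal.toReal_ofReal h0, max_eq_left h0]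

lemma B2_in {x : ℝ} (h0 : -1 ≤ x) (h1 : x ≤ 1) : Bspline 2 x = 1 - |x| := by
  rw [B2_of, max_eq_left (by rcases abs_cases x with ⟨h,_⟩|⟨h,_⟩ <;> linarith)]

lemma B2_out {x : ℝ} (h : 1 ≤ |x|) : Bspline 2 x = 0 := by
  rw [B2_of, max_eq_right (by linarith)]


lemma B2p {x : ℝ} (h0 : 0 ≤ x) (h1 : x ≤ 1) : Bspline 2 x = 1 - x := by
  rw [B2_in (by linarith) h1, _root_.abs_of_nonneg h0]

lemma B2n {x : ℝ} (h0 : x ≤ 0) (h1 : -1 ≤ x) : Bspline 2 x = 1 + x := by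
  rw [B2_in h1 (by linarith), _root_.abs_of_nonpos h0]; ring

lemma B2zn {x : ℝ} (h : x ≤ -1) : Bspline 2 x = 0 :=
  B2_out (le_abs.2 (Or.inr (by linarith)))

lemma B2zp {x : ℝ} (h : 1 ≤ x) : Bspline 2 x = 0 :=
  B2_out (le_abs.2 (Or.inl h))

lemma vanish (a : ℝ) (h1 : 5/16 ≤ a) (h2 : a ≤ 5/14) (c : ℝ) (hc0 : 0 ≤ c) (hc5 : c ≤ 5)
    (n : ℤ) (hn : n ∉ ({-2,-1,0} : Finset ℤ)) :
    Bspline 2 (6*a*(n:ℝ) + a*c + 6*a/5) - Bspline 2 (6*a*(n:ℝ) + a*c + 24*a/5) = 0 := by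
  simp only [Finset.mem_insert, Finset.mem_singleton] at hn
  push_neg at hn
  have hn' : (n:ℝ) ≤ -3 ∨ 1 ≤ (n:ℝ) := by
    rcases show n ≤ -3 ∨ 1 ≤ n by omega with h | h
    · exact Or.inl (by exact_mod_cast h)
    · exact Or.inr (by exact_mod_cast h)
  rcases hn' with h | h
  · rw [B2_out (le_abs.2 (Or.inr (by nlinarith))), B2_out (le_abs.2 (Or.inr (by nlinarith)))]
    ring
  · rw [B2_out (le_abs.2 (Or.inl (by nlinarith))), B2_out (le_abs.2 (Or.inl (by nlinarith)))]
    ring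

/-- the row difference `R₂ - R₅` computation in the proof of Theorem 3.8:
for `ab = 5/6`, `a ∈ [5/16, 5/14]`, the 6a-periodizations of `B₂` satisfy
`∑_n (B₂(6an + aℓ + 1/b) - B₂(6an + aℓ + 4/b)) = (0, -2a, -2a, 0, 2a, 2a)_ℓ`. -/
theorem statement14 (a b : ℝ) (ha : a ∈ Set.Icc (5/16 : ℝ) (5/14)) (hb : b = 5 / (6 * a)) :
    ∀ ℓ : Fin 6,
      (∑' n : ℤ, (Bspline 2 (6 * a * (n : ℝ) + a * ((ℓ : ℕ) : ℝ) + 1 / b)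
        - Bspline 2 (6 * a * (n : ℝ) + a * ((ℓ : ℕ) : ℝ) + 4 / b)))
      = ![0, -2*a, -2*a, 0, 2*a, 2*a] ℓ := by
  obtain ⟨ha1, ha2⟩ := ha
  have hane : a ≠ 0 := by positivity
  have h1b : 1/b = 6*a/5 := by rw [hb]; field_simp
  have h4b : 4/b = 24*a/5 := by rw [hb]; field_simp; ring
  intro ℓ
  simp only [h1b, h4b]
  fin_cases ℓ <;>
    rw [tsum_eq_sum (s := ({-2,-1,0} : Finset ℤ))
      (fun n hn => vanish a ha1 ha2 _ (by norm_num) (by norm_num) n hn),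
      show ({-2,-1,0}:Finset ℤ) = insert (-2) (insert (-1) {0}) from rfl,
      Finset.sum_insert (by norm_num), Finset.sum_insert (by norm_num), Finset.sum_singleton] <;>
    push_cast <;> norm_num
  · rw [show Bspline 2 (-(6 * a * 2) + 6 * a / 5) = 0 from B2zn (by nlinarith),
      show Bspline 2 (-(6 * a * 2) + 24 * a / 5) = 0 from B2zn (by nlinarith),
      show Bspline 2 (-(6 * a) + 6 * a / 5) = 0 from B2zn (by nlinarith),
      show Bspline 2 (-(6 * a) + 24 * a / 5) = 1 + (-(6 * a) + 24 * a / 5) from B2n (by nlinarith) (by nlinarith),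
      show Bspline 2 (6 * a / 5) = 1 - (6 * a / 5) from B2p (by nlinarith) (by nlinarith),
      show Bspline 2 (24 * a / 5) = 0 from B2zp (by nlinarith)]
    ring
  · rw [show Bspline 2 (-(6 * a * 2) + a + 6 * a / 5) = 0 from B2zn (by nlinarith),
      show Bspline 2 (-(6 * a * 2) + a + 24 * a / 5) = 0 from B2zn (by nlinarith),
      show Bspline 2 (-(6 * a) + a + 6 * a / 5) = 0 from B2zn (by nlinarith),
      show Bspline 2 (-(6 * a) + a + 24 * a / 5) = 1 + (-(6 * a) + a + 24 * a / 5) from B2n (by nlinarith) (by nlinarith),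
      show Bspline 2 (a + 6 * a / 5) = 1 - (a + 6 * a / 5) from B2p (by nlinarith) (by nlinarith),
      show Bspline 2 (a + 24 * a / 5) = 0 from B2zp (by nlinarith)]
    ring
  · rw [show Bspline 2 (-(6 * a * 2) + a * 2 + 6 * a / 5) = 0 from B2zn (by nlinarith),
      show Bspline 2 (-(6 * a * 2) + a * 2 + 24 * a / 5) = 0 from B2zn (by nlinarith),
      show Bspline 2 (-(6 * a) + a * 2 + 6 * a / 5) = 1 + (-(6 * a) + a * 2 + 6 * a / 5) from B2n (by nlinarith) (by nlinarith),
      show Bspline 2 (-(6 * a) + a * 2 + 24 * a / 5) = 1 - (-(6 * a) + a * 2 + 24 * a / 5) from B2p (by nlinarith) (by nlinarith),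
      show Bspline 2 (a * 2 + 6 * a / 5) = 0 from B2zp (by nlinarith),
      show Bspline 2 (a * 2 + 24 * a / 5) = 0 from B2zp (by nlinarith)]
    ring
  · rw [show Bspline 2 (-(6 * a * 2) + a * 3 + 6 * a / 5) = 0 from B2zn (by nlinarith),
      show Bspline 2 (-(6 * a * 2) + a * 3 + 24 * a / 5) = 0 from B2zn (by nlinarith),
      show Bspline 2 (-(6 * a) + a * 3 + 6 * a / 5) = 1 + (-(6 * a) + a * 3 + 6 * a / 5) from B2n (by nlinarith) (by nlinarith),
      show Bspline 2 (-(6 * a) + a * 3 + 24 * a / 5) = 1 - (-(6 * a) + a * 3 + 24 * a / 5) from B2p (by nlinarith) (by nlinarith),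
      show Bspline 2 (a * 3 + 6 * a / 5) = 0 from B2zp (by nlinarith),
      show Bspline 2 (a * 3 + 24 * a / 5) = 0 from B2zp (by nlinarith)]
    ring
  · rw [show Bspline 2 (-(6 * a * 2) + a * 4 + 6 * a / 5) = 0 from B2zn (by nlinarith),
      show Bspline 2 (-(6 * a * 2) + a * 4 + 24 * a / 5) = 0 from B2zn (by nlinarith),
      show Bspline 2 (-(6 * a) + a * 4 + 6 * a / 5) = 1 + (-(6 * a) + a * 4 + 6 * a / 5) from B2n (by nlinarith) (by nlinarith),
      show Bspline 2 (-(6 * a) + a * 4 + 24 * a / 5) = 1 - (-(6 * a) + a * 4 + 24 * a / 5) from B2p (by nlinarith) (by nlinarith),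
      show Bspline 2 (a * 4 + 6 * a / 5) = 0 from B2zp (by nlinarith),
      show Bspline 2 (a * 4 + 24 * a / 5) = 0 from B2zp (by nlinarith)]
    ring
  · rw [show Bspline 2 (-(6 * a * 2) + a * 5 + 6 * a / 5) = 0 from B2zn (by nlinarith),
      show Bspline 2 (-(6 * a * 2) + a * 5 + 24 * a / 5) = 1 + (-(6 * a * 2) + a * 5 + 24 * a / 5) from B2n (by nlinarith) (by nlinarith),
      show Bspline 2 (-(6 * a) + a * 5 + 6 * a / 5) = 1 - (-(6 * a) + a * 5 + 6 * a / 5) from B2p (by nlinarith) (by nlinarith),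
      show Bspline 2 (-(6 * a) + a * 5 + 24 * a / 5) = 0 from B2zp (by nlinarith),
      show Bspline 2 (a * 5 + 6 * a / 5) = 0 from B2zp (by nlinarith),
      show Bspline 2 (a * 5 + 24 * a / 5) = 0 from B2zp (by nlinarith)]
    ring

end
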